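/- Let k, λ ∈ ℝ with λ ≥ 0 and let u : [0,∞) → ℝ be a C² function with u(0) = 0 satisfying −u''(x) + (x−k)² u(x) = λ u(x) for all x ≥ 0, and such that u, u', and x ↦ (x−k)u(x) all belong to L²(0,∞), with ∫₀^∞ u(x)² dx = 1. Then for every x ≥ 0 one has u(x)² ≤ 2 (∫₀^∞ u'(t)² dt)^{1/2} ≤ 2 λ^{1/2}; in particular sup_{x≥0} |u(x)| ≤ 2^{1/2} λ^{1/4}. -/

import Mathlib

open MeasureTheory Filter Set

private lemma ftc_aux {f f' : ℝ → ℝ}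
    (hf : ∀ x ∈ Set.Ici (0:ℝ), HasDerivWithinAt f (f' x) (Set.Ici 0) x)
    (hf' : ContinuousOn f' (Set.Ici 0)) {a b : ℝ} (ha : (0:ℝ) ≤ a) (hab : a ≤ b) :
    ∫ y in a..b, f' y = f b - f a := by
  have hsub : Set.Icc a b ⊆ Set.Ici (0:ℝ) := fun x hx => le_trans ha hx.1
  have hc : ContinuousOn f (Set.Ici 0) := fun x hx => (hf x hx).continuousWithinAt
  apply intervalIntegral.integral_eq_sub_of_hasDeriv_right_of_le hab (hc.mono hsub)
  · intro x hx
    have hx0 : (0:ℝ) ≤ x := le_trans ha hx.1.le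
    exact (hf x hx0).mono (fun y hy => le_trans hx0 (le_of_lt hy))
  · exact (hf'.mono hsub).intervalIntegrable_of_Icc hab

set_option maxHeartbeats 1000000 in
/-- pointwise bound for a normalized Dirichlet eigenfunction of the shifted
harmonic oscillator on the half-line: `u(x)² ≤ 2 (∫ u'²)^{1/2} ≤ 2 λ^{1/2}`, hence
`sup |u| ≤ 2^{1/2} λ^{1/4}`. -/
theorem eigenfunction_sup_bound (k lam : ℝ) (hlam : 0 ≤ lam) (u v w : ℝ → ℝ)
    (hu : ∀ x ∈ Set.Ici (0:ℝ), HasDerivWithinAt u (v x) (Set.Ici 0) x)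
    (hv : ∀ x ∈ Set.Ici (0:ℝ), HasDerivWithinAt v (w x) (Set.Ici 0) x)
    (hw : ContinuousOn w (Set.Ici 0))
    (hu0 : u 0 = 0)
    (hode : ∀ x ≥ (0:ℝ), -w x + (x - k) ^ 2 * u x = lam * u x)
    (hL2u : MeasureTheory.IntegrableOn (fun x => (u x) ^ 2) (Set.Ioi 0))
    (hL2v : MeasureTheory.IntegrableOn (fun x => (v x) ^ 2) (Set.Ioi 0))
    (hL2xu : MeasureTheory.IntegrableOn (fun x => ((x - k) * u x) ^ 2) (Set.Ioi 0))
    (hnorm : ∫ x in Set.Ioi (0:ℝ), (u x) ^ 2 = 1) :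
    (∀ x ≥ (0:ℝ), (u x) ^ 2 ≤ 2 * Real.sqrt (∫ t in Set.Ioi (0:ℝ), (v t) ^ 2)) ∧
    2 * Real.sqrt (∫ t in Set.Ioi (0:ℝ), (v t) ^ 2) ≤ 2 * Real.sqrt lam ∧
    ∀ x ≥ (0:ℝ), |u x| ≤ Real.sqrt 2 * lam ^ ((1:ℝ)/4) := by
  set I2 : ℝ := ∫ t in Set.Ioi (0:ℝ), (v t) ^ 2 with hI2def
  set Ix : ℝ := ∫ t in Set.Ioi (0:ℝ), ((t - k) * u t) ^ 2 with hIxdef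
  have hucont : ContinuousOn u (Set.Ici 0) := fun x hx => (hu x hx).continuousWithinAt
  have hvcont : ContinuousOn v (Set.Ici 0) := fun x hx => (hv x hx).continuousWithinAt
  have hu2cont : ContinuousOn (fun x => (u x) ^ 2) (Set.Ici 0) := hucont.pow 2
  have hv2cont : ContinuousOn (fun x => (v x) ^ 2) (Set.Ici 0) := hvcont.pow 2
  have hxucont : ContinuousOn (fun x => ((x - k) * u x) ^ 2) (Set.Ici 0) :=
    ((continuousOn_id.sub continuousOn_const).mul hucont).pow 2
  have hI2nonneg : (0:ℝ) ≤ I2 := integral_nonneg fun t => sq_nonneg _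
  have hIxnonneg : (0:ℝ) ≤ Ix := integral_nonneg fun t => sq_nonneg _
  -- extension of integrals of nonneg functions from [0,b] to (0,∞)
  have hext : ∀ (f : ℝ → ℝ), MeasureTheory.IntegrableOn f (Set.Ioi 0) → (∀ x, 0 ≤ f x) →
      ∀ b, 0 ≤ b → ∫ t in (0:ℝ)..b, f t ≤ ∫ t in Set.Ioi (0:ℝ), f t := by
    intro f hf hpos b hb
    rw [intervalIntegral.integral_of_le hb]
    exact MeasureTheory.setIntegral_mono_set hf (Filter.Eventually.of_forall hpos)
      (Filter.Eventually.of_forall (fun x hx => Set.Ioc_subset_Ioi_self hx))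
  -- FTC for u^2
  have hftcu2 : ∀ a, 0 ≤ a → ∀ b, a ≤ b →
      ∫ t in a..b, (v t * u t + u t * v t) = u b * u b - u a * u a := by
    intro a ha b hab
    exact ftc_aux (f := fun x => u x * u x) (f' := fun x => v x * u x + u x * v x)
      (fun x hx => (hu x hx).mul (hu x hx))
      ((hvcont.mul hucont).add (hucont.mul hvcont)) ha hab
  have hintuv : ∀ a b : ℝ, 0 ≤ a → a ≤ b →
      IntervalIntegrable (fun t => v t * u t + u t * v t) volume a b := by
    intro a b ha hab
    exact (((hvcont.mul hucont).add (hucont.mul hvcont)).mono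
      (fun x hx => le_trans ha hx.1)).intervalIntegrable_of_Icc hab
  -- Step 1 bound with parameter ε
  have hbound : ∀ b, 0 ≤ b → ∀ ε : ℝ, 0 < ε → (u b) ^ 2 ≤ ε + (1/ε) * I2 := by
    intro b hb ε hε
    have hftc := hftcu2 0 le_rfl b hb
    rw [hu0] at hftc
    have hint1 := hintuv 0 b le_rfl hb
    have hint2 : IntervalIntegrable (fun t => ε * (u t)^2 + (1/ε) * (v t)^2) volume 0 b := by
      refine (ContinuousOn.intervalIntegrable_of_Icc hb ?_)
      exact ((continuousOn_const.mul hu2cont).add (continuousOn_const.mul hv2cont)).mono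
        (fun x hx => hx.1)
    have hmono : ∫ t in (0:ℝ)..b, (v t * u t + u t * v t)
        ≤ ∫ t in (0:ℝ)..b, (ε * (u t)^2 + (1/ε) * (v t)^2) := by
      apply intervalIntegral.integral_mono_on hb hint1 hint2
      intro x hx
      have h1 : 0 ≤ (ε * u x - v x)^2 := sq_nonneg _
      have h2 : ε * (v x * u x + u x * v x) ≤ ε * (ε * (u x)^2 + (1/ε) * (v x)^2) := by
        have : (1/ε) * (v x)^2 * ε = (v x)^2 := by field_simp
        nlinarith [sq_nonneg (ε * u x - v x)]
      exact le_of_mul_le_mul_left h2 hε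
    have hiu : IntervalIntegrable (fun t => ε * (u t)^2) volume 0 b :=
      IntervalIntegrable.const_mul ((hu2cont.mono (fun x hx => hx.1)).intervalIntegrable_of_Icc hb) ε
    have hiv : IntervalIntegrable (fun t => (1/ε) * (v t)^2) volume 0 b :=
      IntervalIntegrable.const_mul ((hv2cont.mono (fun x hx => hx.1)).intervalIntegrable_of_Icc hb) (1/ε)
    have hsplit : ∫ t in (0:ℝ)..b, (ε * (u t)^2 + (1/ε) * (v t)^2)
        = (ε * ∫ t in (0:ℝ)..b, (u t)^2) + (1/ε) * ∫ t in (0:ℝ)..b, (v t)^2 := by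
      rw [intervalIntegral.integral_add hiu hiv, intervalIntegral.integral_const_mul,
        intervalIntegral.integral_const_mul]
    have he1 : ∫ t in (0:ℝ)..b, (u t)^2 ≤ 1 := by
      rw [← hnorm]; exact hext _ hL2u (fun x => sq_nonneg _) b hb
    have he2 : ∫ t in (0:ℝ)..b, (v t)^2 ≤ I2 := hext _ hL2v (fun x => sq_nonneg _) b hb
    have hu2 : (u b)^2 = u b * u b := sq (u b) ▸ (sq (u b)).symm ▸ (pow_two (u b))
    have hε' : 0 ≤ 1/ε := by positivity
    calc (u b)^2 = u b * u b - 0 := by rw [pow_two]; ring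
    _ = ∫ t in (0:ℝ)..b, (v t * u t + u t * v t) := by rw [hftc]; ring_nf
    _ ≤ ∫ t in (0:ℝ)..b, (ε * (u t)^2 + (1/ε) * (v t)^2) := hmono
    _ = (ε * ∫ t in (0:ℝ)..b, (u t)^2) + (1/ε) * ∫ t in (0:ℝ)..b, (v t)^2 := hsplit
    _ ≤ ε * 1 + (1/ε) * I2 :=
        add_le_add (mul_le_mul_of_nonneg_left he1 hε.le) (mul_le_mul_of_nonneg_left he2 hε')
    _ = ε + (1/ε) * I2 := by ring
  -- Step 1 conclusion
  have key1 : ∀ x ≥ (0:ℝ), (u x) ^ 2 ≤ 2 * Real.sqrt I2 := by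
    intro b hb
    rcases eq_or_lt_of_le hI2nonneg with h0 | hpos
    · have h1 : ∀ ε > (0:ℝ), (u b)^2 ≤ 0 + ε := by
        intro ε hε
        have := hbound b hb ε hε
        rw [← h0] at this
        simpa using this
      have := le_of_forall_pos_le_add h1
      rw [← h0, Real.sqrt_zero]
      linarith
    · have hs : 0 < Real.sqrt I2 := Real.sqrt_pos.mpr hpos
      have hb1 := hbound b hb (Real.sqrt I2) hs
      have h2 : (1/Real.sqrt I2) * I2 = Real.sqrt I2 := by
        rw [one_div, inv_mul_eq_div, Real.div_sqrt]
      linarith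
  -- Step 2: I2 ≤ lam
  -- FTC for u*v
  have hftcuv : ∀ a, 0 ≤ a → ∀ b, a ≤ b →
      ∫ t in a..b, (v t * v t + u t * w t) = u b * v b - u a * v a := by
    intro a ha b hab
    exact ftc_aux (f := fun x => u x * v x) (f' := fun x => v x * v x + u x * w x)
      (fun x hx => (hu x hx).mul (hv x hx))
      ((hvcont.mul hvcont).add (hucont.mul hw)) ha hab
  have hAeq : ∀ R, 0 ≤ R → u R * v R
      = (∫ t in (0:ℝ)..R, (v t)^2) + ((∫ t in (0:ℝ)..R, ((t-k)*u t)^2)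
        - lam * ∫ t in (0:ℝ)..R, (u t)^2) := by
    intro R hR
    have hftc := hftcuv 0 le_rfl R hR
    rw [hu0] at hftc
    have hcongr : ∫ t in (0:ℝ)..R, (v t * v t + u t * w t)
        = ∫ t in (0:ℝ)..R, ((v t)^2 + (((t-k)*u t)^2 - lam * (u t)^2)) := by
      apply intervalIntegral.integral_congr
      intro t ht
      rw [Set.uIcc_of_le hR] at ht
      have ht0 : (0:ℝ) ≤ t := ht.1
      have hodet := hode t ht0
      have hwt : w t = (t - k)^2 * u t - lam * u t := by linarith
      simp only [hwt]
      ring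
    have hi1 : IntervalIntegrable (fun t => (v t)^2) volume 0 R :=
      (hv2cont.mono (fun x hx => hx.1)).intervalIntegrable_of_Icc hR
    have hi2 : IntervalIntegrable (fun t => ((t-k)*u t)^2) volume 0 R :=
      (hxucont.mono (fun x hx => hx.1)).intervalIntegrable_of_Icc hR
    have hi3 : IntervalIntegrable (fun t => lam * (u t)^2) volume 0 R :=
      IntervalIntegrable.const_mul ((hu2cont.mono (fun x hx => hx.1)).intervalIntegrable_of_Icc hR) lam
    rw [hcongr, intervalIntegral.integral_add hi1 (hi2.sub hi3),
      intervalIntegral.integral_sub hi2 hi3, intervalIntegral.integral_const_mul] at hftc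
    linarith [hftc]
  -- limits of truncated integrals
  have hT1 : Tendsto (fun R => ∫ t in (0:ℝ)..R, (v t)^2) atTop (nhds I2) :=
    intervalIntegral_tendsto_integral_Ioi 0 hL2v tendsto_id
  have hT2 : Tendsto (fun R => ∫ t in (0:ℝ)..R, ((t-k)*u t)^2) atTop (nhds Ix) :=
    intervalIntegral_tendsto_integral_Ioi 0 hL2xu tendsto_id
  have hT3 : Tendsto (fun R => ∫ t in (0:ℝ)..R, (u t)^2) atTop (nhds 1) := by
    rw [← hnorm]
    exact intervalIntegral_tendsto_integral_Ioi 0 hL2u tendsto_id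
  set L : ℝ := I2 + (Ix - lam * 1) with hLdef
  have hA : Tendsto (fun R => u R * v R) atTop (nhds L) := by
    apply Tendsto.congr' _ (hT1.add (hT2.sub (hT3.const_mul lam)))
    filter_upwards [eventually_ge_atTop (0:ℝ)] with R hR
    exact (hAeq R hR).symm
  -- u*v integrable on (0,∞)
  have haesm : AEStronglyMeasurable (fun x => v x * u x + u x * v x) (volume.restrict (Set.Ioi 0)) := by
    have h1 : ContinuousOn (fun x => v x * u x + u x * v x) (Set.Ici 0) :=
      (hvcont.mul hucont).add (hucont.mul hvcont)
    exact (h1.mono Set.Ioi_subset_Ici_self).aestronglyMeasurable measurableSet_Ioi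
  have hIuv : MeasureTheory.IntegrableOn (fun x => v x * u x + u x * v x) (Set.Ioi 0) := by
    apply ((hL2u.add hL2v).add (hL2u.add hL2v)).mono' haesm
    apply ae_of_all
    intro x
    simp only [Real.norm_eq_abs, Pi.add_apply]
    have h1 : |v x * u x + u x * v x| ≤ |u x * v x| + |u x * v x| := by
      rw [mul_comm (v x) (u x)]
      exact abs_add_le _ _
    have h2 : |u x * v x| ≤ (u x)^2 + (v x)^2 := by
      rw [abs_mul]
      nlinarith [sq_nonneg (|u x| - |v x|), sq_abs (u x), sq_abs (v x)]
    linarith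
  set c : ℝ := ∫ t in Set.Ioi (0:ℝ), (v t * u t + u t * v t) with hcdef
  have hB : Tendsto (fun R => u R * u R) atTop (nhds c) := by
    apply Tendsto.congr' _ (intervalIntegral_tendsto_integral_Ioi 0 hIuv tendsto_id)
    filter_upwards [eventually_ge_atTop (0:ℝ)] with R hR
    have h := hftcu2 0 le_rfl R hR
    rw [hu0] at h
    simp only [id_eq]
    rw [h]; ring
  -- c = 0
  have hcnonneg : 0 ≤ c := ge_of_tendsto' hB (fun R => mul_self_nonneg (u R))
  have hczero : c = 0 := by
    by_contra hne
    have hcpos : 0 < c := lt_of_le_of_ne hcnonneg (Ne.symm hne)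
    obtain ⟨R₀, hR₀⟩ := (eventually_atTop).mp (hB.eventually (eventually_ge_nhds (by linarith : c/2 < c)))
    set R₁ : ℝ := max R₀ 0 with hR₁def
    have hR₁0 : (0:ℝ) ≤ R₁ := le_max_right _ _
    have hlow : ∀ R, R₁ ≤ R → (R - R₁) * (c/2) ≤ ∫ t in (0:ℝ)..R, (u t)^2 := by
      intro R hR
      have hR0 : (0:ℝ) ≤ R := le_trans hR₁0 hR
      have hadd : ∫ t in (0:ℝ)..R, (u t)^2
          = (∫ t in (0:ℝ)..R₁, (u t)^2) + ∫ t in R₁..R, (u t)^2 := by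
        rw [intervalIntegral.integral_add_adjacent_intervals]
        · exact (hu2cont.mono (fun x hx => hx.1)).intervalIntegrable_of_Icc hR₁0
        · exact (hu2cont.mono (fun x hx => le_trans hR₁0 hx.1)).intervalIntegrable_of_Icc hR
      have h1 : (0:ℝ) ≤ ∫ t in (0:ℝ)..R₁, (u t)^2 :=
        intervalIntegral.integral_nonneg hR₁0 (fun x _ => sq_nonneg _)
      have h2 : (R - R₁) * (c/2) ≤ ∫ t in R₁..R, (u t)^2 := by
        have hmc : ∫ t in R₁..R, (c/2 : ℝ) ≤ ∫ t in R₁..R, (u t)^2 := by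
          apply intervalIntegral.integral_mono_on hR intervalIntegrable_const
            ((hu2cont.mono (fun x hx => le_trans hR₁0 hx.1)).intervalIntegrable_of_Icc hR)
          intro x hx
          have := hR₀ x (le_trans (le_max_left _ _) hx.1)
          rw [pow_two]; linarith
        rwa [intervalIntegral.integral_const, smul_eq_mul] at hmc
      linarith
    have htend : Tendsto (fun R => (R - R₁) * (c/2)) atTop atTop :=
      Tendsto.atTop_mul_const (by linarith) (tendsto_atTop_add_const_right _ (-R₁) tendsto_id)
    obtain ⟨R₂, hR₂⟩ := (eventually_atTop).mp (htend.eventually_ge_atTop 3)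
    obtain ⟨R₃, hR₃⟩ := (eventually_atTop).mp (hT3.eventually (eventually_le_nhds (by norm_num : (1:ℝ) < 2)))
    set R := max R₁ (max R₂ R₃) with hRdef
    have e1 := hlow R (le_max_left _ _)
    have e2 := hR₂ R (le_trans (le_max_left _ _) (le_max_right _ _))
    have e3 := hR₃ R (le_trans (le_max_right _ _) (le_max_right _ _))
    linarith
  rw [hczero] at hB
  -- L = 0
  have hLzero : L = 0 := by
    rcases lt_trichotomy L 0 with hneg | hz | hpos
    · -- eventually u v ≤ L/2 < 0, u² decreasing to -∞, contradiction
      obtain ⟨R₀, hR₀⟩ := (eventually_atTop).mp (hA.eventually (eventually_le_nhds (by linarith : L < L/2)))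
      set R₁ : ℝ := max R₀ 0 with hR₁def
      have hR₁0 : (0:ℝ) ≤ R₁ := le_max_right _ _
      have hupper : ∀ R, R₁ ≤ R → u R * u R ≤ u R₁ * u R₁ + (R - R₁) * L := by
        intro R hR
        have hftc := hftcu2 R₁ hR₁0 R hR
        have hmc : ∫ t in R₁..R, (v t * u t + u t * v t) ≤ ∫ t in R₁..R, (L : ℝ) := by
          apply intervalIntegral.integral_mono_on hR (hintuv R₁ R hR₁0 hR) intervalIntegrable_const
          intro x hx
          have := hR₀ x (le_trans (le_max_left _ _) hx.1)
          nlinarith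
        rw [intervalIntegral.integral_const, smul_eq_mul, hftc] at hmc
        linarith
      have htend : Tendsto (fun R => u R₁ * u R₁ + (R - R₁) * L) atTop atBot := by
        apply tendsto_atBot_add_const_left
        exact Tendsto.atTop_mul_const_of_neg hneg (tendsto_atTop_add_const_right _ (-R₁) tendsto_id)
      obtain ⟨R₂, hR₂⟩ := (eventually_atTop).mp (htend.eventually_le_atBot (-1))
      set R := max R₁ R₂ with hRdef
      have e1 := hupper R (le_max_left _ _)
      have e2 := hR₂ R (le_max_right _ _)
      nlinarith [mul_self_nonneg (u R)]
    · exact hz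
    · -- eventually u v ≥ L/2 > 0, u² increasing to ∞, contradicts u² → 0
      obtain ⟨R₀, hR₀⟩ := (eventually_atTop).mp (hA.eventually (eventually_ge_nhds (by linarith : L/2 < L)))
      set R₁ : ℝ := max R₀ 0 with hR₁def
      have hR₁0 : (0:ℝ) ≤ R₁ := le_max_right _ _
      have hlow : ∀ R, R₁ ≤ R → (R - R₁) * L ≤ u R * u R := by
        intro R hR
        have hftc := hftcu2 R₁ hR₁0 R hR
        have hmc : ∫ t in R₁..R, (L : ℝ) ≤ ∫ t in R₁..R, (v t * u t + u t * v t) := by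
          apply intervalIntegral.integral_mono_on hR intervalIntegrable_const (hintuv R₁ R hR₁0 hR)
          intro x hx
          have := hR₀ x (le_trans (le_max_left _ _) hx.1)
          nlinarith
        rw [intervalIntegral.integral_const, smul_eq_mul, hftc] at hmc
        nlinarith [mul_self_nonneg (u R₁)]
      have htend : Tendsto (fun R => (R - R₁) * L) atTop atTop :=
        Tendsto.atTop_mul_const hpos (tendsto_atTop_add_const_right _ (-R₁) tendsto_id)
      obtain ⟨R₂, hR₂⟩ := (eventually_atTop).mp (htend.eventually_ge_atTop 1)
      obtain ⟨R₃, hR₃⟩ := (eventually_atTop).mp (hB.eventually (eventually_le_nhds (by norm_num : (0:ℝ) < 1/2)))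
      set R := max R₁ (max R₂ R₃) with hRdef
      have e1 := hlow R (le_max_left _ _)
      have e2 := hR₂ R (le_trans (le_max_left _ _) (le_max_right _ _))
      have e3 := hR₃ R (le_trans (le_max_right _ _) (le_max_right _ _))
      linarith
  have hI2lam : I2 ≤ lam := by
    have : I2 = lam - Ix := by rw [hLdef] at hLzero; linarith [hLzero]
    linarith
  -- conclusions
  have key2 : 2 * Real.sqrt I2 ≤ 2 * Real.sqrt lam := by
    have := Real.sqrt_le_sqrt hI2lam
    linarith
  refine ⟨key1, key2, ?_⟩
  intro x hx
  have h1 : (u x)^2 ≤ 2 * Real.sqrt lam := le_trans (key1 x hx) key2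
  have h2 : |u x| = Real.sqrt ((u x)^2) := (Real.sqrt_sq_eq_abs (u x)).symm
  rw [h2]
  calc Real.sqrt ((u x)^2) ≤ Real.sqrt (2 * Real.sqrt lam) := Real.sqrt_le_sqrt h1
  _ = Real.sqrt 2 * Real.sqrt (Real.sqrt lam) := Real.sqrt_mul (by norm_num) _
  _ = Real.sqrt 2 * lam ^ ((1:ℝ)/4) := by
      congr 1
      rw [Real.sqrt_eq_rpow, Real.sqrt_eq_rpow, ← Real.rpow_mul hlam]
      norm_num
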